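/- A complete theory T has ATP if there exist a formula φ(x;y) and a strongly indiscernible tree (a_η)_{η∈2^{≤ω}} in a monster model of T such that (1) the partial type {φ(x; a_η) : η ∈ 2^ω} has infinitely many realizations, and (2) for every η ∈ 2^{<ω}, the formula φ(x; a_η) ∧ φ(x; a_{η⌢0}) has only finitely many realizations. -/

import Mathlib

open FirstOrder FirstOrder.Language

universe u v w u_g

namespace NATPPaper

/-- Nodes of the tree `2^{≤ω}`: functions `ℕ → Option Bool` whose domain is an initial
segment of `ℕ` (possibly all of `ℕ`, giving the branches `2^ω`). -/
def TNode : Type := {f : ℕ → Option Bool // ∀ i j : ℕ, i ≤ j → f j ≠ none → f i ≠ none}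

namespace TNode

/-- The tree partial order `⊴` (end-extension / initial segment). -/
def PrefixLE (η ν : TNode) : Prop := ∀ (i : ℕ) (b : Bool), η.1 i = some b → ν.1 i = some b

/-- Comparability in the tree order. -/
def Comparable (η ν : TNode) : Prop := PrefixLE η ν ∨ PrefixLE ν η

/-- Antichain: pairwise incomparable set of nodes. -/
def IsAntichain (X : Set TNode) : Prop := ∀ η ∈ X, ∀ ν ∈ X, η ≠ ν → ¬ Comparable η ν

open Classical in
/-- The meet `η ∧ ν`: the longest common initial segment. -/
noncomputable def meet (η ν : TNode) : TNode :=
  ⟨fun i => if (∀ j ≤ i, η.1 j = ν.1 j ∧ η.1 j ≠ none) then η.1 i else none, by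
    intro i j hij hj
    dsimp only at hj ⊢
    by_cases h : ∀ k ≤ j, η.1 k = ν.1 k ∧ η.1 k ≠ none
    · have hi : ∀ k ≤ i, η.1 k = ν.1 k ∧ η.1 k ≠ none := fun k hk => h k (hk.trans hij)
      rw [if_pos hi]
      exact (h i hij).2
    · rw [if_neg h] at hj
      exact absurd rfl hj⟩

/-- The lexicographic (strict) order on tree nodes. -/
def LexLT (η ν : TNode) : Prop :=
  PrefixLE η ν ∨ ∃ i : ℕ, (∀ j < i, η.1 j = ν.1 j) ∧ η.1 i = some false ∧ ν.1 i = some true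

/-- A branch of the tree: an element of `2^ω`. -/
def IsBranch (η : TNode) : Prop := ∀ i : ℕ, η.1 i ≠ none

/-- A finite node `η ∈ 2^{<ω}`, coded by a list of booleans. -/
def ofList (l : List Bool) : TNode :=
  ⟨fun i => l[i]?, by
    intro i j hij hj
    dsimp only at hj ⊢
    rw [Ne, List.getElem?_eq_none_iff] at hj ⊢
    intro hi
    exact hj (le_trans hi hij)⟩

/-- The branch of `2^ω` determined by `f : ℕ → Bool`. -/
def ofBranch (f : ℕ → Bool) : TNode := ⟨fun i => some (f i), fun _ _ _ h => by simp at h ⊢⟩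

end TNode

/-- The language of trees `{⊴, <_lex, ∧}`: one binary function (meet) and two binary
relations (tree order and lexicographic order). -/
def treeLang : FirstOrder.Language :=
  ⟨fun n => PLift (n = 2), fun n => PLift (n = 2) ⊕ PLift (n = 2)⟩

noncomputable instance : treeLang.Structure TNode where
  funMap {n} f v := TNode.meet (v ⟨0, by have := f.down; omega⟩)
    (v ⟨1, by have := f.down; omega⟩)
  RelMap {n} R v :=
    match R with
    | Sum.inl h => TNode.PrefixLE (v ⟨0, by have := h.down; omega⟩)
        (v ⟨1, by have := h.down; omega⟩)
    | Sum.inr h => TNode.LexLT (v ⟨0, by have := h.down; omega⟩)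
        (v ⟨1, by have := h.down; omega⟩)


variable {L : FirstOrder.Language.{u, v}}


/-- Two nodes of the binary tree `2^{<ω}` (coded as lists of booleans) are comparable if one is
an initial segment (prefix) of the other. -/
def TreeComparable (η ν : List Bool) : Prop := η <+: ν ∨ ν <+: η

/-- A set of nodes of `2^{<ω}` is an antichain if its elements are pairwise incomparable. -/
def IsTreeAntichain (X : Set (List Bool)) : Prop :=
  ∀ η ∈ X, ∀ ν ∈ X, η ≠ ν → ¬ TreeComparable η ν

/-- The pair `(φ(x; y), (a_η)_{η ∈ 2^{<ω}})` witnesses the antichain tree property: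
every (finite) antichain is consistent, while any two distinct comparable nodes are
inconsistent. -/
def ATPWitness {M : Type w} [L.Structure M] {n m : ℕ}
    (φ : L.Formula (Fin n ⊕ Fin m)) (a : List Bool → Fin m → M) : Prop :=
  (∀ X : Finset (List Bool), IsTreeAntichain ↑X →
      ∃ b : Fin n → M, ∀ η ∈ X, φ.Realize (Sum.elim b (a η))) ∧
  (∀ η ν : List Bool, η ≠ ν → TreeComparable η ν →
      ¬ ∃ b : Fin n → M, φ.Realize (Sum.elim b (a η)) ∧ φ.Realize (Sum.elim b (a ν)))

/-- A theory has the antichain tree property (ATP) if some formula `φ(x; y)` has ATP,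
witnessed by a tree-indexed family of parameters in some model. -/
def _root_.FirstOrder.Language.Theory.HasATP (T : L.Theory) : Prop :=
  ∃ (M : Theory.ModelType.{u, v, max u v} T) (n m : ℕ)
    (φ : L.Formula (Fin n ⊕ Fin m)) (a : List Bool → Fin m → M), ATPWitness φ a

/-- A theory is NATP if it does not have the antichain tree property.  (For an incomplete
theory this is equivalent to saying that every completion is NATP.) -/
def _root_.FirstOrder.Language.Theory.IsNATP (T : L.Theory) : Prop := ¬ T.HasATP



/-- A tree-indexed family `(a_η)_{η ∈ 2^{≤ω}}` of `γ`-tuples in `M` is strongly indiscernible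
over `A`: finite tuples of indices with the same quantifier-free type in the tree language
`{⊴, <_lex, ∧}` yield parameter tuples with the same type over `A`. -/
def StronglyIndiscernibleOver (L : FirstOrder.Language.{u, v}) {M : Type w} [L.Structure M]
    {γ : Type u_g} (a : TNode → γ → M) (A : Set M) : Prop :=
  ∀ (n : ℕ) (η ν : Fin n → TNode),
    (∀ φ : treeLang.Formula (Fin n), BoundedFormula.IsQF φ → (φ.Realize η ↔ φ.Realize ν)) →
    ∀ (k : ℕ) (c : Fin k → M), (∀ j, c j ∈ A) →
      ∀ ψ : L.Formula ((Fin n × γ) ⊕ Fin k),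
        (ψ.Realize (Sum.elim (fun p => a (η p.1) p.2) c) ↔
          ψ.Realize (Sum.elim (fun p => a (ν p.1) p.2) c))

/-- `(φ(x; y), (a_η)_{η ∈ 2^{≤ω}})` witnesses ATP: for every subset `X ⊆ 2^{≤ω}`, the partial
type `{φ(x; a_η) : η ∈ X}` is realized iff `X` is an antichain. -/
def ATPWitnessFull {M : Type w} [L.Structure M] {n m : ℕ}
    (φ : L.Formula (Fin n ⊕ Fin m)) (a : TNode → Fin m → M) : Prop :=
  ∀ X : Set TNode,
    (∃ b : Fin n → M, ∀ η ∈ X, φ.Realize (Sum.elim b (a η))) ↔ TNode.IsAntichain X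

/-- `M` is `μ`-saturated (for types in small tuples of variables over small parameter sets):
every finitely satisfiable set of formulas is realized. -/
def Saturated (L : FirstOrder.Language.{u, v}) (μ : Cardinal.{w}) (M : Type w) [L.Structure M] : Prop :=
  ∀ (α β : Type w), Cardinal.mk α < μ → Cardinal.mk β < μ →
    ∀ (p : Set (L.Formula (α ⊕ β))) (v : β → M),
      (∀ F : Finset (L.Formula (α ⊕ β)), ↑F ⊆ p →
          ∃ x : α → M, ∀ φ ∈ F, φ.Realize (Sum.elim x v)) →
      ∃ x : α → M, ∀ φ ∈ p, φ.Realize (Sum.elim x v)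


/-- Compatibility: `l.get? i` as `l[i]?`. -/
def _root_.List.get? {α : Type*} (l : List α) (i : ℕ) : Option α := l[i]?

theorem _root_.List.get?_eq_getElem? {α : Type*} (l : List α) (i : ℕ) : l.get? i = l[i]? := rfl

theorem _root_.List.ext_get?_iff {α : Type*} {l l' : List α} :
    l = l' ↔ ∀ i, l.get? i = l'.get? i :=
  ⟨fun h _ => h ▸ rfl, fun h => List.ext_getElem? h⟩

theorem _root_.List.getD_eq_getD_get? {α : Type*} (l : List α) (i : ℕ) (d : α) :
    l.getD i d = (l.get? i).getD d := List.getD_eq_getElem?_getD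

namespace TNode

lemma ext' {η ν : TNode} (h : ∀ i, η.1 i = ν.1 i) : η = ν := Subtype.ext (funext h)

lemma prefixLE_refl (η : TNode) : PrefixLE η η := fun _ _ h => h

lemma prefixLE_trans {x y z : TNode} (h1 : PrefixLE x y) (h2 : PrefixLE y z) : PrefixLE x z :=
  fun i b h => h2 i b (h1 i b h)

lemma prefixLE_antisymm {x y : TNode} (h1 : PrefixLE x y) (h2 : PrefixLE y x) : x = y := by
  apply ext'; intro i
  cases hx : x.1 i with
  | some b => rw [h1 i b hx]
  | none =>
    cases hy : y.1 i with
    | some b => rw [← hx, h2 i b hy]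
    | none => rfl

open Classical in
lemma meet_apply (x y : TNode) (i : ℕ) :
    (meet x y).1 i = if (∀ j ≤ i, x.1 j = y.1 j ∧ x.1 j ≠ none) then x.1 i else none := rfl

lemma meet_apply_of {x y : TNode} {i : ℕ} (h : ∀ j ≤ i, x.1 j = y.1 j ∧ x.1 j ≠ none) :
    (meet x y).1 i = x.1 i := by rw [meet_apply, if_pos h]

lemma meet_apply_not {x y : TNode} {i : ℕ} (h : ¬ (∀ j ≤ i, x.1 j = y.1 j ∧ x.1 j ≠ none)) :
    (meet x y).1 i = none := by rw [meet_apply, if_neg h]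

lemma prefixLE_meet_left (x y : TNode) : PrefixLE (meet x y) x := by
  intro i b h
  by_cases hc : ∀ j ≤ i, x.1 j = y.1 j ∧ x.1 j ≠ none
  · rw [meet_apply_of hc] at h; exact h
  · rw [meet_apply_not hc] at h; cases h

lemma prefixLE_meet_right (x y : TNode) : PrefixLE (meet x y) y := by
  intro i b h
  by_cases hc : ∀ j ≤ i, x.1 j = y.1 j ∧ x.1 j ≠ none
  · rw [meet_apply_of hc] at h; rw [← (hc i le_rfl).1]; exact h
  · rw [meet_apply_not hc] at h; cases h

lemma meet_self (x : TNode) : meet x x = x := by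
  apply ext'; intro i
  by_cases hx : x.1 i = none
  · rw [hx]; exact meet_apply_not fun hc => (hc i le_rfl).2 hx
  · exact meet_apply_of fun j hj => ⟨rfl, x.2 j i hj hx⟩

lemma meet_comm (x y : TNode) : meet x y = meet y x := by
  apply ext'; intro i
  have hiff : (∀ j ≤ i, x.1 j = y.1 j ∧ x.1 j ≠ none) ↔
      (∀ j ≤ i, y.1 j = x.1 j ∧ y.1 j ≠ none) := by
    constructor <;> intro h j hj <;> obtain ⟨h1, h2⟩ := h j hj <;>
      exact ⟨h1.symm, fun hn => h2 (by rw [h1, hn]) ⟩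
  by_cases hc : ∀ j ≤ i, x.1 j = y.1 j ∧ x.1 j ≠ none
  · rw [meet_apply_of hc, meet_apply_of (hiff.1 hc)]; exact (hc i le_rfl).1
  · rw [meet_apply_not hc, meet_apply_not (fun h => hc (hiff.2 h))]

lemma meet_of_prefixLE {x y : TNode} (h : PrefixLE x y) : meet x y = x := by
  apply ext'; intro i
  by_cases hx : x.1 i = none
  · rw [hx]; exact meet_apply_not fun hc => (hc i le_rfl).2 hx
  · refine meet_apply_of fun j hj => ?_
    have hj' : x.1 j ≠ none := x.2 j i hj hx
    obtain ⟨b, hb⟩ := Option.ne_none_iff_exists'.1 hj'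
    exact ⟨by rw [hb, h j b hb], hj'⟩

lemma meet_congr_left {x x' y : TNode} (hagr : ∀ i, x.1 i ≠ none → x'.1 i = x.1 i)
    (hnp : ¬ PrefixLE x y) : meet x' y = meet x y := by
  unfold PrefixLE at hnp
  push_neg at hnp
  obtain ⟨i₀, b, hb, hyb⟩ := hnp
  apply ext'; intro i
  by_cases hlt : i < i₀
  · have hxd : ∀ j ≤ i, x.1 j ≠ none := fun j hj =>
      x.2 j i₀ (le_of_lt (lt_of_le_of_lt hj hlt)) (by rw [hb]; exact Option.some_ne_none b)
    have hcond : (∀ j ≤ i, x'.1 j = y.1 j ∧ x'.1 j ≠ none) ↔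
        (∀ j ≤ i, x.1 j = y.1 j ∧ x.1 j ≠ none) := by
      constructor <;> intro h j hj <;> obtain ⟨h1, h2⟩ := h j hj
      · rw [hagr j (hxd j hj)] at h1
        exact ⟨h1, hxd j hj⟩
      · rw [hagr j (hxd j hj)]
        exact ⟨h1, h2⟩
    by_cases hc : ∀ j ≤ i, x.1 j = y.1 j ∧ x.1 j ≠ none
    · rw [meet_apply_of (hcond.2 hc), meet_apply_of hc, hagr i (hxd i le_rfl)]
    · rw [meet_apply_not (fun h => hc (hcond.1 h)), meet_apply_not hc]
  · have hi₀ : i₀ ≤ i := not_lt.1 hlt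
    have h1 : ¬ (∀ j ≤ i, x.1 j = y.1 j ∧ x.1 j ≠ none) := fun h => by
      have := (h i₀ hi₀).1
      rw [hb] at this
      exact hyb this.symm
    have h2 : ¬ (∀ j ≤ i, x'.1 j = y.1 j ∧ x'.1 j ≠ none) := fun h => by
      have h3 := (h i₀ hi₀).1
      rw [hagr i₀ (by rw [hb]; exact Option.some_ne_none b), hb] at h3
      exact hyb h3.symm
    rw [meet_apply_not h2, meet_apply_not h1]

lemma ofList_apply (l : List Bool) (i : ℕ) : (ofList l).1 i = l.get? i := rfl

lemma ofBranch_apply (g : ℕ → Bool) (i : ℕ) : (ofBranch g).1 i = some (g i) := rfl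

lemma ofList_length_none (l : List Bool) : (ofList l).1 l.length = none := by
  rw [ofList_apply]
  simp [List.get?_eq_getElem?, List.getElem?_eq_none (le_refl _)]

lemma ofList_injective {l l' : List Bool} (h : ofList l = ofList l') : l = l' := by
  rw [List.ext_get?_iff]
  intro i
  have := congrFun (congrArg Subtype.val h) i
  exact this

lemma get?_some_lt {l : List Bool} {i : ℕ} {b : Bool} (h : l.get? i = some b) : i < l.length := by
  by_contra hn
  rw [List.get?_eq_getElem?, List.getElem?_eq_none (not_lt.1 hn)] at h
  cases h

lemma get?_of_lt {l : List Bool} {i : ℕ} (h : i < l.length) : l.get? i = some (l.getD i false) := by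
  rw [List.get?_eq_getElem?, List.getElem?_eq_getElem h, List.getD_eq_getElem _ _ h]

lemma prefix_of_get? {l l' : List Bool} (h : ∀ i b, l.get? i = some b → l'.get? i = some b) :
    l <+: l' := by
  have hlen : l.length ≤ l'.length := by
    by_contra hl
    push_neg at hl
    have h1 := h l'.length (l.getD l'.length false) (get?_of_lt hl)
    rw [List.get?_eq_getElem?, List.getElem?_eq_none (le_refl _)] at h1
    cases h1
  have heq : l = l'.take l.length := by
    rw [List.ext_get?_iff]
    intro i
    rcases lt_or_ge i l.length with hi | hi
    · have hb := get?_of_lt hi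
      rw [hb, List.get?_eq_getElem?, List.getElem?_take_of_lt hi, ← List.get?_eq_getElem?,
        h i _ hb]
    · rw [List.get?_eq_getElem?, List.getElem?_eq_none hi, List.get?_eq_getElem?,
        List.getElem?_eq_none]
      rw [List.length_take]
      exact le_trans (min_le_left _ _) hi
  rw [heq]
  exact List.take_prefix _ _

lemma get?_mono_of_prefix {l l' : List Bool} (h : l <+: l') {i : ℕ} {b : Bool}
    (hb : l.get? i = some b) : l'.get? i = some b := by
  obtain ⟨t, rfl⟩ := h
  have hi := get?_some_lt hb
  rw [List.get?_eq_getElem?, List.getElem?_append_left hi, ← List.get?_eq_getElem?]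
  exact hb

lemma prefixLE_ofList_of_prefix {l l' : List Bool} (h : l <+: l') :
    PrefixLE (ofList l) (ofList l') := fun i b hb => get?_mono_of_prefix h hb

lemma prefix_of_prefixLE {l l' : List Bool} (h : PrefixLE (ofList l) (ofList l')) : l <+: l' :=
  prefix_of_get? h

lemma prefixLE_nil (x : TNode) : PrefixLE (ofList []) x := by
  intro i b hb
  rw [ofList_apply] at hb
  simp [List.get?_eq_getElem?] at hb

lemma not_prefixLE_of_total_of_none {x y : TNode} (hx : ∀ i, x.1 i ≠ none) {i₀ : ℕ}
    (hy : y.1 i₀ = none) : ¬ PrefixLE x y := by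
  intro h
  obtain ⟨b, hb⟩ := Option.ne_none_iff_exists'.1 (hx i₀)
  have := h i₀ b hb
  rw [hy] at this
  cases this

lemma prefixLE_none {x y : TNode} (h : PrefixLE x y) {i : ℕ} (hy : y.1 i = none) :
    x.1 i = none := by
  cases hx : x.1 i with
  | none => rfl
  | some b => have := h i b hx; rw [hy] at this; cases this

/-- The branch obtained from a finite node by extending with `false`s. -/
def brExt (l : List Bool) : TNode := ofBranch (fun i => l.getD i false)

lemma brExt_total (l : List Bool) (i : ℕ) : (brExt l).1 i ≠ none := by
  rw [brExt, ofBranch_apply]; exact Option.some_ne_none _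

lemma brExt_apply_of_get? {l : List Bool} {i : ℕ} {b : Bool} (h : l.get? i = some b) :
    (brExt l).1 i = some b := by
  rw [brExt, ofBranch_apply, List.getD_eq_getD_get?, h]; rfl

lemma prefixLE_ofList_brExt (l : List Bool) : PrefixLE (ofList l) (brExt l) := by
  intro i b hb
  rw [ofList_apply] at hb
  exact brExt_apply_of_get? hb

lemma brExt_true_lt {l : List Bool} {i : ℕ} (h : (brExt l).1 i = some true) : i < l.length := by
  by_contra hn
  rw [brExt, ofBranch_apply, List.getD_eq_default _ _ (not_lt.1 hn)] at h
  cases h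

lemma brExt_agree_lt {l : List Bool} {i : ℕ} (h : i < l.length) :
    (brExt l).1 i = (ofList l).1 i := by
  rw [ofList_apply, get?_of_lt h, brExt, ofBranch_apply]

lemma exists_diff {u w : List Bool} (h : ¬ TreeComparable u w) :
    ∃ d bu bw, u.get? d = some bu ∧ w.get? d = some bw ∧ bu ≠ bw := by
  have hsub : ∀ u w : List Bool, u.length ≤ w.length → ¬ u <+: w →
      ∃ d bu bw, u.get? d = some bu ∧ w.get? d = some bw ∧ bu ≠ bw := by
    intro u w hle hnp
    by_contra hno
    push_neg at hno
    apply hnp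
    apply prefix_of_get?
    intro i b hb
    have hi : i < u.length := get?_some_lt hb
    have hiw : i < w.length := lt_of_lt_of_le hi hle
    have hw := get?_of_lt hiw
    have heq := hno i b (w.getD i false) hb hw
    rw [hw, heq]
  unfold TreeComparable at h
  push_neg at h
  rcases le_total u.length w.length with hle | hle
  · exact hsub u w hle h.1
  · obtain ⟨d, bw, bu, h1, h2, h3⟩ := hsub w u hle h.2
    exact ⟨d, bu, bw, h2, h1, h3.symm⟩

lemma lexLT_of_prefixLE {x y : TNode} (h : PrefixLE x y) : LexLT x y := Or.inl h

lemma not_lexLT_rev_of_prefixLE {x y : TNode} (hxy : PrefixLE x y) (hne : x ≠ y) :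
    ¬ LexLT y x := by
  rintro (h | ⟨i, hagree, hyf, hxt⟩)
  · exact hne (prefixLE_antisymm hxy h)
  · have := hxy i true hxt
    rw [hyf] at this
    cases this

end TNode

open TNode in
lemma realize_qf_partialIso {r : ℕ} (S : Set TNode) (F : TNode → TNode)
    (hSmeet : ∀ x ∈ S, ∀ y ∈ S, TNode.meet x y ∈ S)
    (hFmeet : ∀ x ∈ S, ∀ y ∈ S, F (TNode.meet x y) = TNode.meet (F x) (F y))
    (hFle : ∀ x ∈ S, ∀ y ∈ S, (TNode.PrefixLE x y ↔ TNode.PrefixLE (F x) (F y)))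
    (hFlex : ∀ x ∈ S, ∀ y ∈ S, (TNode.LexLT x y ↔ TNode.LexLT (F x) (F y)))
    (hFinj : ∀ x ∈ S, ∀ y ∈ S, (x = y ↔ F x = F y))
    (η : Fin r → TNode) (hη : ∀ p, η p ∈ S)
    (φ : treeLang.Formula (Fin r)) (hqf : BoundedFormula.IsQF φ) :
    φ.Realize η ↔ φ.Realize (fun p => F (η p)) := by
  have hterm : ∀ t : treeLang.Term (Fin r ⊕ Fin 0),
      t.realize (Sum.elim η (default : Fin 0 → TNode)) ∈ S ∧
      t.realize (Sum.elim (fun p => F (η p)) (default : Fin 0 → TNode)) =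
        F (t.realize (Sum.elim η (default : Fin 0 → TNode))) := by
    intro t
    induction t with
    | var s =>
      cases s with
      | inl p => exact ⟨hη p, rfl⟩
      | inr i => exact i.elim0
    | func f ts ih =>
      rename_i arity
      have h2 : arity = 2 := f.down
      subst h2
      have hfun : ∀ w : Fin 2 → TNode, Structure.funMap (L := treeLang) f w =
          TNode.meet (w 0) (w 1) := fun w => rfl
      simp only [Term.realize_func, hfun]
      constructor
      · exact hSmeet _ (ih 0).1 _ (ih 1).1
      · rw [(ih 0).2, (ih 1).2, hFmeet _ (ih 0).1 _ (ih 1).1]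
  induction hqf with
  | falsum => exact Iff.rfl
  | @of_isAtomic ψ hatom =>
    cases hatom with
    | equal t₁ t₂ =>
      simp only [Formula.Realize, BoundedFormula.realize_bdEqual]
      rw [(hterm t₁).2, (hterm t₂).2]
      exact hFinj _ (hterm t₁).1 _ (hterm t₂).1
    | @rel arity R ts =>
      cases R with
      | inl hR =>
        have h2 : arity = 2 := hR.down
        subst h2
        have hrel : ∀ w : Fin 2 → TNode,
            Structure.RelMap (L := treeLang) (Sum.inl hR) w ↔
              TNode.PrefixLE (w 0) (w 1) := fun w => Iff.rfl
        change (Structure.RelMap (L := treeLang) (Sum.inl hR)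
            fun i => (ts i).realize (Sum.elim η default)) ↔
          Structure.RelMap (L := treeLang) (Sum.inl hR)
            fun i => (ts i).realize (Sum.elim (fun p => F (η p)) default)
        rw [hrel, hrel]
        rw [(hterm (ts 0)).2, (hterm (ts 1)).2]
        exact hFle _ (hterm (ts 0)).1 _ (hterm (ts 1)).1
      | inr hR =>
        have h2 : arity = 2 := hR.down
        subst h2
        have hrel : ∀ w : Fin 2 → TNode,
            Structure.RelMap (L := treeLang) (Sum.inr hR) w ↔
              TNode.LexLT (w 0) (w 1) := fun w => Iff.rfl
        change (Structure.RelMap (L := treeLang) (Sum.inr hR)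
            fun i => (ts i).realize (Sum.elim η default)) ↔
          Structure.RelMap (L := treeLang) (Sum.inr hR)
            fun i => (ts i).realize (Sum.elim (fun p => F (η p)) default)
        rw [hrel, hrel]
        rw [(hterm (ts 0)).2, (hterm (ts 1)).2]
        exact hFlex _ (hterm (ts 0)).1 _ (hterm (ts 1)).1
  | imp h₁ h₂ ih₁ ih₂ =>
    simp only [Formula.Realize, BoundedFormula.realize_imp] at *
    exact imp_congr ih₁ ih₂

open TNode in
lemma qf_pair_transfer {u w : List Bool} (hpre : u <+: w) (hne : u ≠ w)
    (φ : treeLang.Formula (Fin 2)) (hqf : BoundedFormula.IsQF φ) :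
    φ.Realize ![TNode.ofList u, TNode.ofList w] ↔
      φ.Realize ![TNode.ofList ([] : List Bool), TNode.ofList [false] ] := by
  classical
  set ρ := TNode.ofList u with hρdef
  set σ := TNode.ofList w with hσdef
  set ρ₀ := TNode.ofList ([] : List Bool) with hρ₀def
  set σ₀ := TNode.ofList [false] with hσ₀def
  have hρσ : PrefixLE ρ σ := prefixLE_ofList_of_prefix hpre
  have hρσne : ρ ≠ σ := fun h => hne (ofList_injective h)
  have hρ₀σ₀ : PrefixLE ρ₀ σ₀ := prefixLE_nil _
  have hρ₀σ₀ne : ρ₀ ≠ σ₀ := by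
    intro h
    have := ofList_injective h
    simp at this
  set F : TNode → TNode := fun x => if x = ρ then ρ₀ else if x = σ then σ₀ else x with hFdef
  have hFρ : F ρ = ρ₀ := by simp [hFdef]
  have hFσ : F σ = σ₀ := by
    show (if σ = ρ then ρ₀ else if σ = σ then σ₀ else σ) = σ₀
    rw [if_neg (fun h => hρσne h.symm), if_pos rfl]
  set S : Set TNode := {ρ, σ} with hSdef
  have hmem : ∀ x ∈ S, x = ρ ∨ x = σ := by
    intro x hx
    simpa [hSdef] using hx
  have hSmeet : ∀ x ∈ S, ∀ y ∈ S, TNode.meet x y ∈ S := by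
    intro x hx y hy
    rcases hmem x hx with rfl | rfl <;> rcases hmem y hy with rfl | rfl
    · rw [meet_self]; exact Set.mem_insert _ _
    · rw [meet_of_prefixLE hρσ]; exact Set.mem_insert _ _
    · rw [meet_comm, meet_of_prefixLE hρσ]; exact Set.mem_insert _ _
    · rw [meet_self]; exact Set.mem_insert_of_mem _ rfl
  have hFmeet : ∀ x ∈ S, ∀ y ∈ S, F (TNode.meet x y) = TNode.meet (F x) (F y) := by
    intro x hx y hy
    rcases hmem x hx with rfl | rfl <;> rcases hmem y hy with rfl | rfl
    · rw [meet_self, hFρ, meet_self]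
    · rw [meet_of_prefixLE hρσ, hFρ, hFσ, meet_of_prefixLE hρ₀σ₀]
    · rw [meet_comm, meet_of_prefixLE hρσ, hFρ, hFσ, meet_comm, meet_of_prefixLE hρ₀σ₀]
    · rw [meet_self, hFσ, meet_self]
  have hFle : ∀ x ∈ S, ∀ y ∈ S, (PrefixLE x y ↔ PrefixLE (F x) (F y)) := by
    intro x hx y hy
    rcases hmem x hx with rfl | rfl <;> rcases hmem y hy with rfl | rfl
    · exact iff_of_true (prefixLE_refl _) (prefixLE_refl _)
    · rw [hFρ, hFσ]
      exact iff_of_true hρσ hρ₀σ₀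
    · rw [hFσ, hFρ]
      constructor
      · intro h; exact absurd (prefixLE_antisymm hρσ h) hρσne
      · intro h; exact absurd (prefixLE_antisymm hρ₀σ₀ h) hρ₀σ₀ne
    · exact iff_of_true (prefixLE_refl _) (prefixLE_refl _)
  have hFlex : ∀ x ∈ S, ∀ y ∈ S, (LexLT x y ↔ LexLT (F x) (F y)) := by
    intro x hx y hy
    rcases hmem x hx with rfl | rfl <;> rcases hmem y hy with rfl | rfl
    · exact iff_of_true (Or.inl (prefixLE_refl _)) (Or.inl (prefixLE_refl _))
    · rw [hFρ, hFσ]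
      exact iff_of_true (Or.inl hρσ) (Or.inl hρ₀σ₀)
    · rw [hFσ, hFρ]
      exact iff_of_false (not_lexLT_rev_of_prefixLE hρσ hρσne)
        (not_lexLT_rev_of_prefixLE hρ₀σ₀ hρ₀σ₀ne)
    · exact iff_of_true (Or.inl (prefixLE_refl _)) (Or.inl (prefixLE_refl _))
  have hFinj : ∀ x ∈ S, ∀ y ∈ S, (x = y ↔ F x = F y) := by
    intro x hx y hy
    rcases hmem x hx with rfl | rfl <;> rcases hmem y hy with rfl | rfl
    · exact iff_of_true rfl rfl
    · rw [hFρ, hFσ]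
      exact iff_of_false hρσne hρ₀σ₀ne
    · rw [hFσ, hFρ]
      exact iff_of_false (fun h => hρσne h.symm) (fun h => hρ₀σ₀ne h.symm)
    · exact iff_of_true rfl rfl
  have hη : ∀ p : Fin 2, (![ρ, σ] p) ∈ S := by
    intro p
    fin_cases p
    · exact Set.mem_insert _ _
    · exact Set.mem_insert_of_mem _ rfl
  have hmain := realize_qf_partialIso S F hSmeet hFmeet hFle hFlex hFinj ![ρ, σ] hη φ hqf
  have heq : (fun p => F (![ρ, σ] p)) = ![ρ₀, σ₀] := by
    funext p
    fin_cases p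
    · simp [hFρ]
    · simp [hFσ]
  rw [heq] at hmain
  exact hmain

open TNode in
lemma qf_antichain_transfer {r : ℕ} (l : Fin r → List Bool)
    (hinc : ∀ p q, p ≠ q → ¬ TreeComparable (l p) (l q))
    (φ : treeLang.Formula (Fin r)) (hqf : BoundedFormula.IsQF φ) :
    φ.Realize (fun p => TNode.ofList (l p)) ↔ φ.Realize (fun p => TNode.brExt (l p)) := by
  classical
  set S : Set TNode := {x | ∃ p, PrefixLE x (TNode.ofList (l p))} with hSdef
  set F : TNode → TNode :=
    fun x => if h : ∃ p, x = TNode.ofList (l p) then brExt (l (Classical.choose h)) else x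
    with hFdef
  have hF_η : ∀ p, F (TNode.ofList (l p)) = brExt (l p) := by
    intro p
    have hex : ∃ q, TNode.ofList (l p) = TNode.ofList (l q) := ⟨p, rfl⟩
    show (if h : ∃ q, TNode.ofList (l p) = TNode.ofList (l q)
        then brExt (l (Classical.choose h)) else TNode.ofList (l p)) = brExt (l p)
    rw [dif_pos hex, ← ofList_injective hex.choose_spec]
  have hF_ne : ∀ x : TNode, (∀ s, x ≠ TNode.ofList (l s)) → F x = x := by
    intro x hx
    exact dif_neg (fun ⟨s, hs⟩ => hx s hs)
  have hsep : ∀ p q, p ≠ q → ∃ d bp bq,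
      (TNode.ofList (l p)).1 d = some bp ∧ (brExt (l p)).1 d = some bp ∧
      (TNode.ofList (l q)).1 d = some bq ∧ (brExt (l q)).1 d = some bq ∧ bp ≠ bq := by
    intro p q hpq
    obtain ⟨d, bp, bq, hp, hq, hne⟩ := exists_diff (hinc p q hpq)
    exact ⟨d, bp, bq, hp, brExt_apply_of_get? hp, hq, brExt_apply_of_get? hq, hne⟩
  have hnople : ∀ (x y : TNode) (d : ℕ) (bx by' : Bool), x.1 d = some bx → y.1 d = some by' →
      bx ≠ by' → ¬ PrefixLE x y := by
    intro x y d bx by' hx hy hne hle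
    have h2 := hle d bx hx
    rw [hy] at h2
    exact hne (Option.some.inj h2).symm
  have hnot_ηη : ∀ p q, p ≠ q → ¬ PrefixLE (TNode.ofList (l p)) (TNode.ofList (l q)) := by
    intro p q hpq
    obtain ⟨d, bp, bq, h1, h2, h3, h4, hne⟩ := hsep p q hpq
    exact hnople _ _ d bp bq h1 h3 hne
  have hnot_ηf : ∀ p q, p ≠ q → ¬ PrefixLE (TNode.ofList (l p)) (brExt (l q)) := by
    intro p q hpq
    obtain ⟨d, bp, bq, h1, h2, h3, h4, hne⟩ := hsep p q hpq
    exact hnople _ _ d bp bq h1 h4 hne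
  have hnot_ff : ∀ p q, p ≠ q → ¬ PrefixLE (brExt (l p)) (brExt (l q)) := by
    intro p q hpq
    obtain ⟨d, bp, bq, h1, h2, h3, h4, hne⟩ := hsep p q hpq
    exact hnople _ _ d bp bq h2 h4 hne
  have not_etaLE : ∀ p (y : TNode), (∃ q, PrefixLE y (TNode.ofList (l q))) →
      (∀ s, y ≠ TNode.ofList (l s)) → ¬ PrefixLE (TNode.ofList (l p)) y := by
    rintro p y ⟨q, hyq⟩ hyn hle
    by_cases hpq : p = q
    · subst hpq
      exact hyn p (prefixLE_antisymm hyq hle)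
    · exact hnot_ηη p q hpq (prefixLE_trans hle hyq)
  have hnone : ∀ y : TNode, (∃ q, PrefixLE y (TNode.ofList (l q))) → ∃ i, y.1 i = none := by
    rintro y ⟨q, hyq⟩
    exact ⟨(l q).length, prefixLE_none hyq (ofList_length_none _)⟩
  have hagr : ∀ p i, (TNode.ofList (l p)).1 i ≠ none →
      (brExt (l p)).1 i = (TNode.ofList (l p)).1 i := by
    intro p i hi
    obtain ⟨b, hb⟩ := Option.ne_none_iff_exists'.1 hi
    exact brExt_agree_lt (get?_some_lt hb)
  have hle_nf : ∀ q (x : TNode), (∃ s, PrefixLE x (TNode.ofList (l s))) →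
      (∀ s, x ≠ TNode.ofList (l s)) →
      (PrefixLE x (TNode.ofList (l q)) ↔ PrefixLE x (brExt (l q))) := by
    intro q x hx hxn
    constructor
    · intro h
      exact prefixLE_trans h (prefixLE_ofList_brExt _)
    · intro h i b hxi
      by_cases hi : i < (l q).length
      · have h2 := h i b hxi
        rw [brExt_agree_lt hi] at h2
        exact h2
      · exfalso
        apply not_etaLE q x hx hxn
        intro j c hjc
        have hj : j < (l q).length := get?_some_lt hjc
        have hjle : j ≤ i := le_trans (le_of_lt hj) (not_lt.1 hi)
        have hxj : x.1 j ≠ none := x.2 j i hjle (by rw [hxi]; exact Option.some_ne_none b)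
        obtain ⟨c', hc'⟩ := Option.ne_none_iff_exists'.1 hxj
        have h4 := h j c' hc'
        rw [brExt_agree_lt hj, hjc] at h4
        rw [hc']
        exact h4.symm
  -- membership facts
  have hmemS : ∀ x : TNode, x ∈ S → ∃ q, PrefixLE x (TNode.ofList (l q)) := fun x hx => hx
  have hSmeet : ∀ x ∈ S, ∀ y ∈ S, TNode.meet x y ∈ S := by
    intro x hx y hy
    obtain ⟨q, hq⟩ := hmemS x hx
    exact ⟨q, prefixLE_trans (prefixLE_meet_left x y) hq⟩
  have hFinj : ∀ x ∈ S, ∀ y ∈ S, (x = y ↔ F x = F y) := by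
    intro x hx y hy
    by_cases hxη : ∃ s, x = TNode.ofList (l s)
    · obtain ⟨p, rfl⟩ := hxη
      by_cases hyη : ∃ s, y = TNode.ofList (l s)
      · obtain ⟨q, rfl⟩ := hyη
        rw [hF_η p, hF_η q]
        by_cases hpq : p = q
        · subst hpq
          exact iff_of_true rfl rfl
        · refine iff_of_false (fun h => hnot_ηη p q hpq ?_) (fun h => hnot_ff p q hpq ?_)
          · rw [h]; exact prefixLE_refl _
          · rw [h]; exact prefixLE_refl _
      · have hyn : ∀ s, y ≠ TNode.ofList (l s) := fun s hs => hyη ⟨s, hs⟩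
        rw [hF_η p, hF_ne y hyn]
        obtain ⟨i, hi⟩ := hnone y hy
        refine iff_of_false (fun h => hyn p h.symm) (fun h => brExt_total (l p) i ?_)
        rw [h]; exact hi
    · have hxn : ∀ s, x ≠ TNode.ofList (l s) := fun s hs => hxη ⟨s, hs⟩
      by_cases hyη : ∃ s, y = TNode.ofList (l s)
      · obtain ⟨q, rfl⟩ := hyη
        rw [hF_ne x hxn, hF_η q]
        obtain ⟨i, hi⟩ := hnone x hx
        refine iff_of_false (fun h => hxn q h) (fun h => brExt_total (l q) i ?_)
        rw [← h]; exact hi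
      · have hyn : ∀ s, y ≠ TNode.ofList (l s) := fun s hs => hyη ⟨s, hs⟩
        rw [hF_ne x hxn, hF_ne y hyn]
  have hFle : ∀ x ∈ S, ∀ y ∈ S, (PrefixLE x y ↔ PrefixLE (F x) (F y)) := by
    intro x hx y hy
    by_cases hxη : ∃ s, x = TNode.ofList (l s)
    · obtain ⟨p, rfl⟩ := hxη
      by_cases hyη : ∃ s, y = TNode.ofList (l s)
      · obtain ⟨q, rfl⟩ := hyη
        rw [hF_η p, hF_η q]
        by_cases hpq : p = q
        · subst hpq
          exact iff_of_true (prefixLE_refl _) (prefixLE_refl _)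
        · exact iff_of_false (hnot_ηη p q hpq) (hnot_ff p q hpq)
      · have hyn : ∀ s, y ≠ TNode.ofList (l s) := fun s hs => hyη ⟨s, hs⟩
        rw [hF_η p, hF_ne y hyn]
        obtain ⟨i, hi⟩ := hnone y hy
        exact iff_of_false (not_etaLE p y hy hyn)
          (not_prefixLE_of_total_of_none (brExt_total (l p)) hi)
    · have hxn : ∀ s, x ≠ TNode.ofList (l s) := fun s hs => hxη ⟨s, hs⟩
      by_cases hyη : ∃ s, y = TNode.ofList (l s)
      · obtain ⟨q, rfl⟩ := hyη
        rw [hF_ne x hxn, hF_η q]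
        exact hle_nf q x hx hxn
      · have hyn : ∀ s, y ≠ TNode.ofList (l s) := fun s hs => hyη ⟨s, hs⟩
        rw [hF_ne x hxn, hF_ne y hyn]
  have hFlex : ∀ x ∈ S, ∀ y ∈ S, (LexLT x y ↔ LexLT (F x) (F y)) := by
    intro x hx y hy
    by_cases hxη : ∃ s, x = TNode.ofList (l s)
    · obtain ⟨p, rfl⟩ := hxη
      by_cases hyη : ∃ s, y = TNode.ofList (l s)
      · obtain ⟨q, rfl⟩ := hyη
        rw [hF_η p, hF_η q]
        by_cases hpq : p = q
        · subst hpq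
          exact iff_of_true (Or.inl (prefixLE_refl _)) (Or.inl (prefixLE_refl _))
        · constructor
          · rintro (h | ⟨i, hag, hxf, hyt⟩)
            · exact absurd h (hnot_ηη p q hpq)
            · have hip : i < (l p).length := get?_some_lt hxf
              have hiq : i < (l q).length := get?_some_lt hyt
              refine Or.inr ⟨i, fun j hj => ?_, ?_, ?_⟩
              · rw [brExt_agree_lt (lt_trans hj hip), brExt_agree_lt (lt_trans hj hiq)]
                exact hag j hj
              · rw [brExt_agree_lt hip]; exact hxf
              · rw [brExt_agree_lt hiq]; exact hyt
          · rintro (h | ⟨i, hag, hxf, hyt⟩)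
            · exact absurd h (hnot_ff p q hpq)
            · obtain ⟨d, bp, bq, h1, h2, h3, h4, hne⟩ := hsep p q hpq
              have hid : i ≤ d := by
                by_contra hgt
                push_neg at hgt
                have h5 := hag d hgt
                rw [h2, h4] at h5
                exact hne (Option.some.inj h5)
              have hip : i < (l p).length := lt_of_le_of_lt hid (get?_some_lt h1)
              have hiq : i < (l q).length := lt_of_le_of_lt hid (get?_some_lt h3)
              refine Or.inr ⟨i, fun j hj => ?_, ?_, ?_⟩
              · rw [← brExt_agree_lt (lt_trans hj hip), ← brExt_agree_lt (lt_trans hj hiq)]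
                exact hag j hj
              · rw [← brExt_agree_lt hip]; exact hxf
              · rw [← brExt_agree_lt hiq]; exact hyt
      · have hyn : ∀ s, y ≠ TNode.ofList (l s) := fun s hs => hyη ⟨s, hs⟩
        rw [hF_η p, hF_ne y hyn]
        constructor
        · rintro (h | ⟨i, hag, hxf, hyt⟩)
          · exact absurd h (not_etaLE p y hy hyn)
          · have hip : i < (l p).length := get?_some_lt hxf
            refine Or.inr ⟨i, fun j hj => ?_, ?_, hyt⟩
            · rw [brExt_agree_lt (lt_trans hj hip)]
              exact hag j hj
            · rw [brExt_agree_lt hip]; exact hxf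
        · rintro (h | ⟨i, hag, hxf, hyt⟩)
          · exfalso
            obtain ⟨i0, hi0⟩ := hnone y hy
            exact not_prefixLE_of_total_of_none (brExt_total (l p)) hi0 h
          · by_cases hip : i < (l p).length
            · refine Or.inr ⟨i, fun j hj => ?_, ?_, hyt⟩
              · rw [← brExt_agree_lt (lt_trans hj hip)]
                exact hag j hj
              · rw [← brExt_agree_lt hip]; exact hxf
            · exfalso
              apply not_etaLE p y hy hyn
              intro j c hjc
              have hj : j < (l p).length := get?_some_lt hjc
              have hji : j < i := lt_of_lt_of_le hj (not_lt.1 hip)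
              have h5 := hag j hji
              rw [brExt_agree_lt hj, hjc] at h5
              exact h5.symm
    · have hxn : ∀ s, x ≠ TNode.ofList (l s) := fun s hs => hxη ⟨s, hs⟩
      by_cases hyη : ∃ s, y = TNode.ofList (l s)
      · obtain ⟨q, rfl⟩ := hyη
        rw [hF_ne x hxn, hF_η q]
        constructor
        · rintro (h | ⟨i, hag, hxf, hyt⟩)
          · exact Or.inl ((hle_nf q x hx hxn).1 h)
          · have hiq : i < (l q).length := get?_some_lt hyt
            refine Or.inr ⟨i, fun j hj => ?_, hxf, ?_⟩
            · rw [brExt_agree_lt (lt_trans hj hiq)]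
              exact hag j hj
            · rw [brExt_agree_lt hiq]; exact hyt
        · rintro (h | ⟨i, hag, hxf, hyt⟩)
          · exact Or.inl ((hle_nf q x hx hxn).2 h)
          · have hiq : i < (l q).length := brExt_true_lt hyt
            refine Or.inr ⟨i, fun j hj => ?_, hxf, ?_⟩
            · rw [← brExt_agree_lt (lt_trans hj hiq)]
              exact hag j hj
            · rw [← brExt_agree_lt hiq]; exact hyt
      · have hyn : ∀ s, y ≠ TNode.ofList (l s) := fun s hs => hyη ⟨s, hs⟩
        rw [hF_ne x hxn, hF_ne y hyn]
  have hFmeet : ∀ x ∈ S, ∀ y ∈ S, F (TNode.meet x y) = TNode.meet (F x) (F y) := by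
    intro x hx y hy
    by_cases hxη : ∃ s, x = TNode.ofList (l s)
    · obtain ⟨p, rfl⟩ := hxη
      by_cases hyη : ∃ s, y = TNode.ofList (l s)
      · obtain ⟨q, rfl⟩ := hyη
        by_cases hpq : p = q
        · subst hpq
          rw [meet_self, hF_η p, meet_self]
        · have hrhs : TNode.meet (brExt (l p)) (brExt (l q)) =
              TNode.meet (TNode.ofList (l p)) (TNode.ofList (l q)) := by
            calc TNode.meet (brExt (l p)) (brExt (l q))
                = TNode.meet (TNode.ofList (l p)) (brExt (l q)) :=
                  meet_congr_left (hagr p) (hnot_ηf p q hpq)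
              _ = TNode.meet (brExt (l q)) (TNode.ofList (l p)) := meet_comm _ _
              _ = TNode.meet (TNode.ofList (l q)) (TNode.ofList (l p)) :=
                  meet_congr_left (hagr q) (hnot_ηη q p (Ne.symm hpq))
              _ = TNode.meet (TNode.ofList (l p)) (TNode.ofList (l q)) := meet_comm _ _
          have hmne : ∀ s, TNode.meet (TNode.ofList (l p)) (TNode.ofList (l q)) ≠
              TNode.ofList (l s) := by
            intro s hs
            have hsp : PrefixLE (TNode.ofList (l s)) (TNode.ofList (l p)) := by
              rw [← hs]; exact prefixLE_meet_left _ _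
            have hsq : PrefixLE (TNode.ofList (l s)) (TNode.ofList (l q)) := by
              rw [← hs]; exact prefixLE_meet_right _ _
            by_cases hsp' : s = p
            · subst hsp'
              exact hnot_ηη s q hpq hsq
            · exact hnot_ηη s p hsp' hsp
          rw [hF_η p, hF_η q, hrhs, hF_ne _ hmne]
      · have hyn : ∀ s, y ≠ TNode.ofList (l s) := fun s hs => hyη ⟨s, hs⟩
        have hnpy : ¬ PrefixLE (TNode.ofList (l p)) y := not_etaLE p y hy hyn
        have hrhs : TNode.meet (brExt (l p)) y = TNode.meet (TNode.ofList (l p)) y :=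
          meet_congr_left (hagr p) hnpy
        have hmne : ∀ s, TNode.meet (TNode.ofList (l p)) y ≠ TNode.ofList (l s) := by
          intro s hs
          apply not_etaLE s y hy hyn
          rw [← hs]; exact prefixLE_meet_right _ _
        rw [hF_η p, hF_ne y hyn, hrhs, hF_ne _ hmne]
    · have hxn : ∀ s, x ≠ TNode.ofList (l s) := fun s hs => hxη ⟨s, hs⟩
      by_cases hyη : ∃ s, y = TNode.ofList (l s)
      · obtain ⟨q, rfl⟩ := hyη
        have hnqx : ¬ PrefixLE (TNode.ofList (l q)) x := not_etaLE q x hx hxn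
        have hrhs : TNode.meet x (brExt (l q)) = TNode.meet x (TNode.ofList (l q)) := by
          rw [meet_comm x (brExt (l q)), meet_comm x (TNode.ofList (l q))]
          exact meet_congr_left (hagr q) hnqx
        have hmne : ∀ s, TNode.meet x (TNode.ofList (l q)) ≠ TNode.ofList (l s) := by
          intro s hs
          apply not_etaLE s x hx hxn
          rw [← hs]; exact prefixLE_meet_left _ _
        rw [hF_ne x hxn, hF_η q, hrhs, hF_ne _ hmne]
      · have hyn : ∀ s, y ≠ TNode.ofList (l s) := fun s hs => hyη ⟨s, hs⟩
        have hmne : ∀ s, TNode.meet x y ≠ TNode.ofList (l s) := by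
          intro s hs
          apply not_etaLE s x hx hxn
          rw [← hs]; exact prefixLE_meet_left _ _
        rw [hF_ne x hxn, hF_ne y hyn, hF_ne _ hmne]
  have hη : ∀ p, (TNode.ofList (l p)) ∈ S := fun p => ⟨p, prefixLE_refl _⟩
  have hmain := realize_qf_partialIso S F hSmeet hFmeet hFle hFlex hFinj
    (fun p => TNode.ofList (l p)) hη φ hqf
  have heq : (fun p => F (TNode.ofList (l p))) = fun p => brExt (l p) := funext fun p => hF_η p
  rw [heq] at hmain
  exact hmain

section FormulaLayer

variable {L' : FirstOrder.Language.{u, v}} {M' : Type w} [L'.Structure M']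

lemma formulaRealize_eq {α : Type*} (ψ : L'.Formula α) (v : α → M') (v' : Fin 0 → M') :
    BoundedFormula.Realize ψ v v' ↔ Formula.Realize ψ v := by
  have hv : v' = default := funext fun i => i.elim0
  rw [hv]
  exact Iff.rfl

variable {n m : ℕ}

/-- The formula `∃ x₀ … x_k (pairwise distinct n-tuples), ⋀_{i ≤ k} ⋀_{p < r} φ(x_i; y_p)`. -/
noncomputable def chiFml (φ : L'.Formula (Fin n ⊕ Fin m)) (r k : ℕ) :
    L'.Formula ((Fin r × Fin m) ⊕ Fin 0) :=
  Formula.iExs (Fin (k+1) × Fin n)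
    ((BoundedFormula.iInf fun ip : Fin (k+1) × Fin r =>
        φ.relabel (Sum.elim (fun c : Fin n => Sum.inr (ip.1, c))
          (fun j : Fin m => Sum.inl (Sum.inl (ip.2, j))))) ⊓
      BoundedFormula.iInf fun ij : Fin (k+1) × Fin (k+1) =>
        if ij.1 = ij.2 then ⊤ else
          Formula.not (BoundedFormula.iInf fun c : Fin n =>
            Term.equal (Term.var (Sum.inr (ij.1, c))) (Term.var (Sum.inr (ij.2, c)))))

lemma realize_chiFml (φ : L'.Formula (Fin n ⊕ Fin m)) (r k : ℕ)
    (w : (Fin r × Fin m) ⊕ Fin 0 → M') :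
    (chiFml φ r k).Realize w ↔
      ∃ b : (Fin (k+1) × Fin n) → M',
        (∀ (i : Fin (k+1)) (p : Fin r),
          φ.Realize (Sum.elim (fun c => b (i, c)) (fun j => w (Sum.inl (p, j))))) ∧
        (∀ i j : Fin (k+1), i ≠ j → ∃ c, b (i, c) ≠ b (j, c)) := by
  classical
  rw [chiFml, Formula.realize_iExs]
  refine exists_congr fun b => ?_
  have hid : (fun a => Sum.elim w b (id a)) = Sum.elim w b := rfl
  rw [Formula.realize_inf]
  apply and_congr
  · rw [Formula.Realize, BoundedFormula.realize_iInf]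
    constructor
    · intro h i p
      have h2 := h (i, p)
      rw [formulaRealize_eq, Formula.realize_relabel] at h2
      have hg : (Sum.elim w b) ∘ (Sum.elim (fun c : Fin n => Sum.inr (i, c))
          (fun j : Fin m => Sum.inl (Sum.inl (p, j)))) =
          Sum.elim (fun c => b (i, c)) (fun j => w (Sum.inl (p, j))) := by
        funext s; cases s <;> rfl
      rw [hg] at h2
      exact h2
    · intro h ip
      rw [formulaRealize_eq, Formula.realize_relabel]
      have hg : (Sum.elim w b) ∘ (Sum.elim (fun c : Fin n => Sum.inr (ip.1, c))
          (fun j : Fin m => Sum.inl (Sum.inl (ip.2, j)))) =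
          Sum.elim (fun c => b (ip.1, c)) (fun j => w (Sum.inl (ip.2, j))) := by
        funext s; cases s <;> rfl
      rw [hg]
      exact h ip.1 ip.2
  · rw [Formula.Realize, BoundedFormula.realize_iInf]
    constructor
    · intro h i j hij
      have h2 := h (i, j)
      rw [if_neg hij, formulaRealize_eq, Formula.realize_not] at h2
      by_contra hc
      push_neg at hc
      apply h2
      rw [Formula.Realize, BoundedFormula.realize_iInf]
      intro c
      rw [formulaRealize_eq, Formula.realize_equal]
      simp only [Term.realize_var, Sum.elim_inr]
      exact hc c
    · intro h ij
      by_cases hij : ij.1 = ij.2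
      · rw [if_pos hij, formulaRealize_eq, Formula.realize_top]
        trivial
      · rw [if_neg hij, formulaRealize_eq, Formula.realize_not]
        intro hall
        rw [Formula.Realize, BoundedFormula.realize_iInf] at hall
        obtain ⟨c, hc⟩ := h ij.1 ij.2 hij
        apply hc
        have h3 := hall c
        rw [formulaRealize_eq, Formula.realize_equal] at h3
        simpa using h3

/-- The ATP-witnessing formula `⋀_{i ≤ k} φ(x_i; y) ∧ (pairwise distinctness of the x_i)`. -/
noncomputable def psiFml (φ : L'.Formula (Fin n ⊕ Fin m)) (k : ℕ) :
    L'.Formula (Fin ((k+1) * n) ⊕ Fin m) :=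
  (BoundedFormula.iInf fun i : Fin (k+1) =>
    φ.relabel (Sum.elim (fun c : Fin n => Sum.inl (finProdFinEquiv (i, c))) Sum.inr)) ⊓
  BoundedFormula.iInf fun ij : Fin (k+1) × Fin (k+1) =>
    if ij.1 = ij.2 then ⊤ else
      Formula.not (BoundedFormula.iInf fun c : Fin n =>
        Term.equal (Term.var (Sum.inl (finProdFinEquiv (ij.1, c))))
          (Term.var (Sum.inl (finProdFinEquiv (ij.2, c)))))

lemma realize_psiFml (φ : L'.Formula (Fin n ⊕ Fin m)) (k : ℕ)
    (b : Fin ((k+1) * n) → M') (a' : Fin m → M') :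
    (psiFml φ k).Realize (Sum.elim b a') ↔
      (∀ i : Fin (k+1),
        φ.Realize (Sum.elim (fun c => b (finProdFinEquiv (i, c))) a')) ∧
      (∀ i j : Fin (k+1), i ≠ j →
        ∃ c, b (finProdFinEquiv (i, c)) ≠ b (finProdFinEquiv (j, c))) := by
  classical
  rw [psiFml, Formula.realize_inf]
  apply and_congr
  · rw [Formula.Realize, BoundedFormula.realize_iInf]
    constructor
    · intro h i
      have h2 := h i
      rw [formulaRealize_eq, Formula.realize_relabel] at h2
      have hg : (Sum.elim b a') ∘ (Sum.elim (fun c : Fin n =>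
          Sum.inl (finProdFinEquiv (i, c))) Sum.inr) =
          Sum.elim (fun c => b (finProdFinEquiv (i, c))) a' := by
        funext s; cases s <;> rfl
      rw [hg] at h2
      exact h2
    · intro h i
      rw [formulaRealize_eq, Formula.realize_relabel]
      have hg : (Sum.elim b a') ∘ (Sum.elim (fun c : Fin n =>
          Sum.inl (finProdFinEquiv (i, c))) Sum.inr) =
          Sum.elim (fun c => b (finProdFinEquiv (i, c))) a' := by
        funext s; cases s <;> rfl
      rw [hg]
      exact h i
  · rw [Formula.Realize, BoundedFormula.realize_iInf]
    constructor
    · intro h i j hij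
      have h2 := h (i, j)
      rw [if_neg hij, formulaRealize_eq, Formula.realize_not] at h2
      by_contra hc
      push_neg at hc
      apply h2
      rw [Formula.Realize, BoundedFormula.realize_iInf]
      intro c
      rw [formulaRealize_eq, Formula.realize_equal]
      simp only [Term.realize_var, Sum.elim_inl]
      exact hc c
    · intro h ij
      by_cases hij : ij.1 = ij.2
      · rw [if_pos hij, formulaRealize_eq, Formula.realize_top]
        trivial
      · rw [if_neg hij, formulaRealize_eq, Formula.realize_not]
        intro hall
        rw [Formula.Realize, BoundedFormula.realize_iInf] at hall
        obtain ⟨c, hc⟩ := h ij.1 ij.2 hij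
        apply hc
        have h3 := hall c
        rw [formulaRealize_eq, Formula.realize_equal] at h3
        simpa using h3

end FormulaLayer

/-- **Proposition 2.17**: A complete theory `T` has ATP if there are a formula `φ(x; y)` and a
strongly indiscernible tree `(a_η)_{η ∈ 2^{≤ω}}` in a monster model of `T` such that
(1) `{φ(x; a_η) : η ∈ 2^ω}` has infinitely many realizations, and
(2) `φ(x; a_η) ∧ φ(x; a_{η⌢0})` has only finitely many realizations for every `η ∈ 2^{<ω}`. -/
theorem hasATP_of_infinite_branches_finite_paths
    (T : L.Theory) (hT : T.IsComplete)
    (M : Type (max u v)) [L.Structure M] [Nonempty M] (hM : M ⊨ T)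
    (μ : Cardinal.{max u v}) (hμ : Cardinal.continuum < μ) (hsat : Saturated L μ M)
    {n m : ℕ} (φ : L.Formula (Fin n ⊕ Fin m)) (a : TNode → Fin m → M)
    (hind : StronglyIndiscernibleOver L a (∅ : Set M))
    (h1 : {b : Fin n → M | ∀ f : ℕ → Bool,
        φ.Realize (Sum.elim b (a (TNode.ofBranch f)))}.Infinite)
    (h2 : ∀ l : List Bool, {b : Fin n → M |
        φ.Realize (Sum.elim b (a (TNode.ofList l))) ∧
        φ.Realize (Sum.elim b (a (TNode.ofList (l ++ [false]))))}.Finite) :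
    T.HasATP := by
  classical
  set k := (h2 []).toFinset.card with hkdef
  haveI : T.Model M := hM
  -- the contradiction for comparable pairs
  have pair_contra : ∀ u w : List Bool, u <+: w → u ≠ w →
      ¬ ∃ b : Fin ((k+1)*n) → M,
        (psiFml φ k).Realize (Sum.elim b (a (TNode.ofList u))) ∧
        (psiFml φ k).Realize (Sum.elim b (a (TNode.ofList w))) := by
    rintro u w hpre hne ⟨b, hbu, hbw⟩
    rw [realize_psiFml] at hbu hbw
    have hχ : (chiFml φ 2 k).Realize
        (Sum.elim (fun p : Fin 2 × Fin m => a ((![TNode.ofList u, TNode.ofList w]) p.1) p.2)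
          (fun x : Fin 0 => x.elim0)) := by
      rw [realize_chiFml]
      refine ⟨fun ic => b (finProdFinEquiv ic), fun i p => ?_, fun i j hij => ?_⟩
      · refine Fin.cases ?_ ?_ p
        · exact hbu.1 i
        · intro p1
          have hp1 : p1 = 0 := Subsingleton.elim _ _
          subst hp1
          exact hbw.1 i
      · exact hbu.2 i j hij
    have hqf := fun (ψ' : treeLang.Formula (Fin 2)) (hq : BoundedFormula.IsQF ψ') =>
      qf_pair_transfer hpre hne ψ' hq
    have htrans := hind 2 (![TNode.ofList u, TNode.ofList w])
      (![TNode.ofList ([] : List Bool), TNode.ofList [false] ]) hqf 0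
      (fun x => x.elim0) (fun j => j.elim0) (chiFml φ 2 k)
    rw [htrans] at hχ
    rw [realize_chiFml] at hχ
    obtain ⟨b', hb1, hb2⟩ := hχ
    set t : Fin (k+1) → (Fin n → M) := fun i c => b' (i, c) with htdef
    have hmemt : ∀ i, t i ∈ (h2 []).toFinset := by
      intro i
      rw [Set.Finite.mem_toFinset]
      exact ⟨hb1 i 0, hb1 i 1⟩
    have hinjt : Function.Injective t := by
      intro i j hij
      by_contra hne'
      obtain ⟨c, hc⟩ := hb2 i j hne'
      exact hc (congrFun hij c)
    have hcard := Finset.card_le_card_of_injOn (s := (Finset.univ : Finset (Fin (k+1))))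
        (t := (h2 []).toFinset) t (fun i _ => hmemt i) hinjt.injOn
    rw [Finset.card_univ, Fintype.card_fin, ← hkdef] at hcard
    omega
  refine ⟨Theory.ModelType.of T M, (k+1)*n, m, psiFml φ k, fun lx => a (TNode.ofList lx),
    ?_, ?_⟩
  · -- antichains are consistent
    intro X hX
    set lvec : Fin X.card → List Bool := fun p => (X.equivFin.symm p : List Bool) with hlvecdef
    have hlvec_mem : ∀ p, lvec p ∈ X := fun p => (X.equivFin.symm p).2
    have hlvec_inj : Function.Injective lvec := by
      intro p q h
      exact X.equivFin.symm.injective (Subtype.ext h)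
    have hinc : ∀ p q, p ≠ q → ¬ TreeComparable (lvec p) (lvec q) := by
      intro p q hpq
      exact hX (lvec p) (hlvec_mem p) (lvec q) (hlvec_mem q) (fun h => hpq (hlvec_inj h))
    obtain ⟨tset, htsub, htcard⟩ := h1.exists_subset_card_eq (k+1)
    set u : Fin (k+1) → (Fin n → M) :=
      fun i => ((Finset.equivFinOfCardEq htcard).symm i : Fin n → M) with hudef
    have hub : ∀ i, ∀ f : ℕ → Bool, φ.Realize (Sum.elim (u i) (a (TNode.ofBranch f))) := by
      intro i
      exact htsub ((Finset.equivFinOfCardEq htcard).symm i).2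
    have huinj : Function.Injective u := by
      intro i j h
      exact (Finset.equivFinOfCardEq htcard).symm.injective (Subtype.ext h)
    have hχf : (chiFml φ X.card k).Realize
        (Sum.elim (fun p : Fin X.card × Fin m => a (TNode.brExt (lvec p.1)) p.2)
          (fun x : Fin 0 => x.elim0)) := by
      rw [realize_chiFml]
      refine ⟨fun ic => u ic.1 ic.2, fun i p => ?_, fun i j hij => ?_⟩
      · exact hub i (fun idx => (lvec p).getD idx false)
      · have hne : u i ≠ u j := fun h => hij (huinj h)
        obtain ⟨c, hc⟩ := Function.ne_iff.1 hne
        exact ⟨c, hc⟩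
    have hqf := fun (ψ' : treeLang.Formula (Fin X.card)) (hq : BoundedFormula.IsQF ψ') =>
      qf_antichain_transfer lvec hinc ψ' hq
    have htrans := hind X.card (fun p => TNode.ofList (lvec p)) (fun p => TNode.brExt (lvec p))
      hqf 0 (fun x => x.elim0) (fun j => j.elim0) (chiFml φ X.card k)
    have hχη := htrans.mpr hχf
    rw [realize_chiFml] at hχη
    obtain ⟨b', hb1, hb2⟩ := hχη
    refine ⟨fun x => b' (finProdFinEquiv.symm x), ?_⟩
    intro ηl hηl
    obtain ⟨p, hp⟩ : ∃ p, lvec p = ηl :=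
      ⟨X.equivFin ⟨ηl, hηl⟩, by simp [hlvecdef]⟩
    rw [← hp]; refine (realize_psiFml (M' := M) φ k _ _).mpr ?_
    constructor
    · intro i
      have h3 := hb1 i p
      have hfun : (fun c => b' (finProdFinEquiv.symm (finProdFinEquiv (i, c)))) =
          fun c : Fin n => b' (i, c) := by
        funext c; rw [Equiv.symm_apply_apply]
      show Formula.Realize φ (Sum.elim
        (fun c => b' (finProdFinEquiv.symm (finProdFinEquiv (i, c))))
        (a (TNode.ofList (lvec p))))
      rw [hfun]
      exact h3
    · intro i j hij
      obtain ⟨c, hc⟩ := hb2 i j hij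
      refine ⟨c, ?_⟩
      simpa using hc
  · -- comparable pairs are inconsistent
    rintro ηl νl hne hcomp ⟨b, hb1, hb2⟩
    rcases hcomp with h | h
    · exact pair_contra ηl νl h hne ⟨b, hb1, hb2⟩
    · exact pair_contra νl ηl h (Ne.symm hne) ⟨b, hb2, hb1⟩

end NATPPaper
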